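/- For every integer N ≥ 1: Σ_{j=1}^{N} (−1)^{j−1} j · C(2N, N−j) U_{2j−1}(z) = N · 2^{2N−1} z (1 − z²)^{N−1}. -/

import Mathlib

open Polynomial Finset

namespace Stmt15Aux


noncomputable def c (N : ℕ) (j : ℤ) : ℚ :=
  if j.natAbs ≤ N then (-1 : ℚ) ^ j * ((2 * N).choose (N - j.natAbs) : ℚ) else 0

lemma c_neg (N : ℕ) (j : ℤ) : c N (-j) = c N j := by
  unfold c
  rw [Int.natAbs_neg]
  congr 1
  rw [zpow_neg]
  rcases Int.even_or_odd j with h | h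
  · rw [h.neg_one_zpow]; norm_num
  · rw [h.neg_one_zpow]; norm_num

lemma c_natCast (N k : ℕ) : c N (k : ℤ) = if k ≤ N then (-1 : ℚ) ^ k * ((2 * N).choose (N - k) : ℚ) else 0 := by
  unfold c
  rw [Int.natAbs_natCast, zpow_natCast]

lemma pascal2 (n e : ℕ) :
    (n + 2).choose (e + 2) = n.choose e + 2 * n.choose (e + 1) + n.choose (e + 2) := by
  rw [Nat.choose_succ_succ (n + 1) (e + 1), Nat.choose_succ_succ n e,
    Nat.choose_succ_succ n (e + 1)]
  ring

lemma pascalc (n : ℕ) (hn : 1 ≤ n) :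
    (2 * n + 2).choose (n + 1) = 2 * (2 * n).choose n + 2 * (2 * n).choose (n - 1) := by
  obtain ⟨m, rfl⟩ : ∃ m, n = m + 1 := ⟨n - 1, by omega⟩
  have h := pascal2 (2 * (m + 1)) m
  have hsym : (2 * (m + 1)).choose (m + 2) = (2 * (m + 1)).choose m := by
    have := Nat.choose_symm (n := 2 * (m + 1)) (k := m + 2) (by omega)
    rw [show 2 * (m + 1) - (m + 2) = m by omega] at this
    omega
  rw [show m + 1 + 1 = m + 2 by omega, show m + 1 - 1 = m by omega]
  omega

lemma c_rec_nonneg (N k : ℕ) :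
    c (N + 1) (k : ℤ) = 2 * c N k - c N ((k : ℤ) - 1) - c N ((k : ℤ) + 1) := by
  rcases k with _ | m
  · -- k = 0
    rw [show ((0:ℕ):ℤ) - 1 = -(((1:ℕ)):ℤ) by norm_num, c_neg,
      show ((0:ℕ):ℤ) + 1 = ((1:ℕ):ℤ) by norm_num, c_natCast, c_natCast, c_natCast]
    rcases Nat.eq_zero_or_pos N with rfl | hN
    · norm_num
    · rw [if_pos (by omega), if_pos (by omega), if_pos (by omega)]
      rw [show 2 * (N + 1) = 2 * N + 2 by ring, show N + 1 - 0 = N + 1 by omega, pascalc N hN, Nat.sub_zero]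
      push_cast
      ring
  · -- k = m + 1
    have h1 : ((m + 1 : ℕ) : ℤ) - 1 = ((m : ℕ) : ℤ) := by push_cast; ring
    have h2 : ((m + 1 : ℕ) : ℤ) + 1 = ((m + 2 : ℕ) : ℤ) := by push_cast; ring
    rw [h1, h2, c_natCast, c_natCast, c_natCast, c_natCast]
    rcases le_or_gt (m + 2) N with h | h
    · rw [if_pos (by omega), if_pos (by omega), if_pos (by omega), if_pos (by omega)]
      obtain ⟨e, rfl⟩ : ∃ e, N = m + 2 + e := ⟨N - (m + 2), by omega⟩
      rw [show (m + 2 + e) + 1 - (m + 1) = e + 2 by omega,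
        show m + 2 + e - (m + 1) = e + 1 by omega,
        show m + 2 + e - m = e + 2 by omega,
        show m + 2 + e - (m + 2) = e by omega,
        show 2 * (m + 2 + e + 1) = 2 * (m + 2 + e) + 2 by ring,
        pascal2 (2 * (m + 2 + e)) e]
      push_cast
      ring
    · rcases le_or_gt (m + 1) N with h' | h'
      · -- N = m + 1
        have hN : N = m + 1 := by omega
        subst hN
        rw [if_pos (by omega), if_pos (by omega), if_pos (by omega), if_neg (by omega)]
        rw [show (m + 1) + 1 - (m + 1) = 1 by omega, show (m + 1) - (m + 1) = 0 by omega,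
          show (m + 1) - m = 1 by omega, Nat.choose_one_right, Nat.choose_one_right,
          Nat.choose_zero_right]
        push_cast
        ring
      · rcases le_or_gt m N with h'' | h''
        · -- N = m
          have hN : N = m := by omega
          subst hN
          rw [if_pos (by omega), if_neg (by omega), if_pos (by omega), if_neg (by omega)]
          rw [show N + 1 - (N + 1) = 0 by omega, show N - N = 0 by omega,
            Nat.choose_zero_right, Nat.choose_zero_right]
          push_cast
          ring
        · rw [if_neg (by omega), if_neg (by omega), if_neg (by omega), if_neg (by omega)]
          ring

lemma c_rec (N : ℕ) (j : ℤ) : c (N + 1) j = 2 * c N j - c N (j - 1) - c N (j + 1) := by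
  rcases le_or_gt 0 j with hj | hj
  · obtain ⟨k, rfl⟩ := Int.eq_ofNat_of_zero_le hj
    exact c_rec_nonneg N k
  · obtain ⟨k, rfl⟩ : ∃ k : ℕ, j = -(k : ℤ) := ⟨j.natAbs, by omega⟩
    rw [c_neg (N + 1) (k : ℤ), c_neg N (k : ℤ),
      show (-(k:ℤ)) - 1 = -((k:ℤ) + 1) by ring, c_neg N ((k:ℤ) + 1),
      show (-(k:ℤ)) + 1 = -((k:ℤ) - 1) by ring, c_neg N ((k:ℤ) - 1)]
    linarith [c_rec_nonneg N k]

lemma c_eq_zero {N : ℕ} {j : ℤ} (h : N < j.natAbs) : c N j = 0 := if_neg (by omega)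

noncomputable def S (N : ℕ) : ℚ[X] :=
  ∑ j ∈ Finset.Icc (-(N : ℤ)) N, C (c N j) * Chebyshev.T ℚ (2 * j)

lemma G (N : ℕ) : (4 * (1 - X ^ 2) : ℚ[X]) ^ N = S N := by
  induction N with
  | zero =>
    simp [S, c, Chebyshev.T_zero]
  | succ N ih =>
    have hB : ∑ j ∈ Finset.Icc (-((N : ℤ) + 1)) ((N : ℤ) + 1), C (c N (j - 1)) * Chebyshev.T ℚ (2 * j)
        = ∑ k ∈ Finset.Icc (-(N : ℤ)) N, C (c N k) * Chebyshev.T ℚ (2 * k + 2) := by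
      have b1 : ∑ j ∈ Finset.Icc (-((N : ℤ) + 1)) ((N : ℤ) + 1), C (c N (j - 1)) * Chebyshev.T ℚ (2 * j)
          = ∑ k ∈ Finset.Icc (-(N : ℤ) - 2) N, C (c N k) * Chebyshev.T ℚ (2 * k + 2) := by
        apply Finset.sum_nbij' (fun j => j - 1) (fun k => k + 1)
        · intro a ha; simp only [Finset.mem_Icc] at *; omega
        · intro a ha; simp only [Finset.mem_Icc] at *; omega
        · intro a _; ring
        · intro a _; ring
        · intro a _; congr 1; ring
      have b2 : ∑ k ∈ Finset.Icc (-(N : ℤ)) N, C (c N k) * Chebyshev.T ℚ (2 * k + 2)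
          = ∑ k ∈ Finset.Icc (-(N : ℤ) - 2) N, C (c N k) * Chebyshev.T ℚ (2 * k + 2) := by
        apply Finset.sum_subset
        · apply Finset.Icc_subset_Icc <;> omega
        · intro x hx hx'
          simp only [Finset.mem_Icc] at *
          rw [c_eq_zero (by omega : N < x.natAbs), map_zero, zero_mul]
      rw [b1, b2]
    have hB' : ∑ j ∈ Finset.Icc (-((N : ℤ) + 1)) ((N : ℤ) + 1), C (c N (j + 1)) * Chebyshev.T ℚ (2 * j)
        = ∑ k ∈ Finset.Icc (-(N : ℤ)) N, C (c N k) * Chebyshev.T ℚ (2 * k - 2) := by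
      have b1 : ∑ j ∈ Finset.Icc (-((N : ℤ) + 1)) ((N : ℤ) + 1), C (c N (j + 1)) * Chebyshev.T ℚ (2 * j)
          = ∑ k ∈ Finset.Icc (-(N : ℤ)) ((N : ℤ) + 2), C (c N k) * Chebyshev.T ℚ (2 * k - 2) := by
        apply Finset.sum_nbij' (fun j => j + 1) (fun k => k - 1)
        · intro a ha; simp only [Finset.mem_Icc] at *; omega
        · intro a ha; simp only [Finset.mem_Icc] at *; omega
        · intro a _; ring
        · intro a _; ring
        · intro a _; congr 1; ring
      have b2 : ∑ k ∈ Finset.Icc (-(N : ℤ)) N, C (c N k) * Chebyshev.T ℚ (2 * k - 2)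
          = ∑ k ∈ Finset.Icc (-(N : ℤ)) ((N : ℤ) + 2), C (c N k) * Chebyshev.T ℚ (2 * k - 2) := by
        apply Finset.sum_subset
        · apply Finset.Icc_subset_Icc <;> omega
        · intro x hx hx'
          simp only [Finset.mem_Icc] at *
          rw [c_eq_zero (by omega : N < x.natAbs), map_zero, zero_mul]
      rw [b1, b2]
    have hA : ∑ j ∈ Finset.Icc (-((N : ℤ) + 1)) ((N : ℤ) + 1), C (c N j) * Chebyshev.T ℚ (2 * j)
        = ∑ k ∈ Finset.Icc (-(N : ℤ)) N, C (c N k) * Chebyshev.T ℚ (2 * k) := by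
      symm
      apply Finset.sum_subset
      · apply Finset.Icc_subset_Icc <;> omega
      · intro x hx hx'
        simp only [Finset.mem_Icc] at *
        rw [c_eq_zero (by omega : N < x.natAbs), map_zero, zero_mul]
    have expand : ∀ k ∈ Finset.Icc (-(N : ℤ)) (N : ℤ),
        (2 - 2 * Chebyshev.T ℚ 2) * (C (c N k) * Chebyshev.T ℚ (2 * k))
        = 2 * (C (c N k) * Chebyshev.T ℚ (2 * k))
          - C (c N k) * Chebyshev.T ℚ (2 * k + 2)
          - C (c N k) * Chebyshev.T ℚ (2 * k - 2) := by
      intro k _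
      have h := Chebyshev.T_mul_T ℚ (2 * k) 2
      linear_combination (-(C (c N k))) * h
    have crec : ∀ j ∈ Finset.Icc (-((N : ℤ) + 1)) ((N : ℤ) + 1),
        C (c (N + 1) j) * Chebyshev.T ℚ (2 * j)
        = 2 * (C (c N j) * Chebyshev.T ℚ (2 * j))
          - C (c N (j - 1)) * Chebyshev.T ℚ (2 * j)
          - C (c N (j + 1)) * Chebyshev.T ℚ (2 * j) := by
      intro j _
      rw [c_rec, map_sub, map_sub]
      simp only [map_mul, map_ofNat]
      ring
    calc (4 * (1 - X ^ 2) : ℚ[X]) ^ (N + 1)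
        = (2 - 2 * Chebyshev.T ℚ 2) * (4 * (1 - X ^ 2) : ℚ[X]) ^ N := by
          rw [Chebyshev.T_two]; ring
      _ = (2 - 2 * Chebyshev.T ℚ 2) * S N := by rw [ih]
      _ = S (N + 1) := by
          rw [S, S, Finset.mul_sum, Finset.sum_congr rfl expand,
            show (((N + 1 : ℕ)) : ℤ) = (N : ℤ) + 1 by push_cast; ring,
            Finset.sum_congr rfl crec]
          simp only [Finset.sum_sub_distrib]
          rw [← Finset.mul_sum, ← Finset.mul_sum, hA, hB, hB']

/-- the summand after differentiation -/
noncomputable def F (N : ℕ) (j : ℤ) : ℚ[X] :=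
  C (c N j * ((2 * j : ℤ) : ℚ)) * Chebyshev.U ℚ (2 * j - 1)

lemma F_neg (N : ℕ) (j : ℤ) : F N (-j) = F N j := by
  unfold F
  have hc : c N (-j) * ((2 * -j : ℤ) : ℚ) = -(c N j * ((2 * j : ℤ) : ℚ)) := by
    rw [c_neg]; push_cast; ring
  rw [hc, map_neg, show (2 * (-j) - 1 : ℤ) = -(2 * j) - 1 by ring, Chebyshev.U_neg_sub_one]
  ring

lemma F_zero (N : ℕ) : F N 0 = 0 := by
  simp [F]

lemma deriv_S (N : ℕ) :
    derivative (S N) = ∑ j ∈ Finset.Icc (-(N : ℤ)) N, F N j := by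
  rw [S, derivative_sum]
  apply Finset.sum_congr rfl
  intro j _
  rw [derivative_C_mul, Chebyshev.T_derivative_eq_U, F,
    show ((2 * j : ℤ) : ℚ[X]) = C ((2 * j : ℤ) : ℚ) from (Polynomial.C_eq_intCast _).symm,
    map_mul]
  ring

lemma sym_sum (N : ℕ) :
    ∑ j ∈ Finset.Icc (-(N : ℤ)) N, F N j = 2 * ∑ j ∈ Finset.Icc (1 : ℤ) N, F N j := by
  have hsplit : Finset.Icc (-(N : ℤ)) (N : ℤ)
      = Finset.Icc (-(N : ℤ)) 0 ∪ Finset.Icc (1 : ℤ) N := by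
    ext x; simp only [Finset.mem_Icc, Finset.mem_union]; omega
  have hdisj : Disjoint (Finset.Icc (-(N : ℤ)) 0) (Finset.Icc (1 : ℤ) N) := by
    rw [Finset.disjoint_left]
    intro a ha ha'
    simp only [Finset.mem_Icc] at *
    omega
  rw [hsplit, Finset.sum_union hdisj]
  have hneg : ∑ j ∈ Finset.Icc (-(N : ℤ)) 0, F N j = ∑ j ∈ Finset.Icc (0 : ℤ) N, F N j := by
    apply Finset.sum_nbij' (fun j => -j) (fun j => -j)
    · intro a ha; simp only [Finset.mem_Icc] at *; omega
    · intro a ha; simp only [Finset.mem_Icc] at *; omega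
    · intro a _; ring
    · intro a _; ring
    · intro a _; exact (F_neg N a).symm
  rw [hneg, show Finset.Icc (0 : ℤ) (N : ℤ) = insert 0 (Finset.Icc (1 : ℤ) N) by
    ext x; simp only [Finset.mem_Icc, Finset.mem_insert]; omega,
    Finset.sum_insert (by simp), F_zero]
  ring

lemma int_to_nat_sum (N : ℕ) :
    ∑ j ∈ Finset.Icc (1 : ℤ) N, F N j = ∑ j ∈ Finset.Icc 1 N, F N (j : ℤ) := by
  symm
  apply Finset.sum_nbij' (fun (j : ℕ) => (j : ℤ)) (fun (j : ℤ) => j.toNat)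
  · intro a ha; simp only [Finset.mem_Icc] at *; omega
  · intro a ha; simp only [Finset.mem_Icc] at *; omega
  · intro a _; simp
  · intro a ha; simp only [Finset.mem_Icc] at ha; omega
  · intro a _; rfl

end Stmt15Aux

open Stmt15Aux in
/-- `∑_{j=1}^N (-1)^{j-1} j C(2N, N-j) U_{2j-1}(z) = N 2^{2N-1} z (1-z²)^{N-1}` for `N ≥ 1`. -/
theorem stmt15 (N : ℕ) (hN : 1 ≤ N) :
    ∑ j ∈ Finset.Icc 1 N,
        Polynomial.C ((-1 : ℚ) ^ (j - 1) * (j : ℚ) * ((2 * N).choose (N - j) : ℚ)) *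
          Polynomial.Chebyshev.U ℚ (2 * (j : ℤ) - 1) =
      Polynomial.C ((N : ℚ) * 2 ^ (2 * N - 1)) * Polynomial.X *
        (1 - Polynomial.X ^ 2) ^ (N - 1) := by
  obtain ⟨M, rfl⟩ : ∃ M, N = M + 1 := ⟨N - 1, by omega⟩
  -- differentiate G
  have hd := congrArg derivative (G (M + 1))
  rw [deriv_S, sym_sum, int_to_nat_sum, derivative_pow] at hd
  have hder : derivative (4 * (1 - X ^ 2) : ℚ[X]) = -(8 * X) := by
    simp [derivative_sub, derivative_one, derivative_X_pow]
    ring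
  rw [hder, show (M + 1) - 1 = M from rfl] at hd
  have key : ∀ j ∈ Finset.Icc 1 (M + 1),
      (2 : ℚ[X]) *
        (Polynomial.C ((-1 : ℚ) ^ (j - 1) * (j : ℚ) * ((2 * (M + 1)).choose ((M + 1) - j) : ℚ)) *
          Polynomial.Chebyshev.U ℚ (2 * (j : ℤ) - 1))
        = -F (M + 1) (j : ℤ) := by
    intro j hj
    simp only [Finset.mem_Icc] at hj
    obtain ⟨i, rfl⟩ : ∃ i, j = i + 1 := ⟨j - 1, by omega⟩
    rw [F, c_natCast, if_pos (by omega),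
      show (2 : ℚ[X]) = C (2 : ℚ) from (map_ofNat _ 2).symm, ← mul_assoc, ← map_mul,
      ← neg_mul, ← map_neg]
    congr 1
    push_cast
    ring
  apply mul_left_cancel₀ (show (4 : ℚ[X]) ≠ 0 by norm_num)
  have h4 : (4 : ℚ[X]) * (∑ j ∈ Finset.Icc 1 (M + 1),
      Polynomial.C ((-1 : ℚ) ^ (j - 1) * (j : ℚ) * ((2 * (M + 1)).choose ((M + 1) - j) : ℚ)) *
        Polynomial.Chebyshev.U ℚ (2 * (j : ℤ) - 1))
      = 2 * ∑ j ∈ Finset.Icc 1 (M + 1), (2 : ℚ[X]) *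
        (Polynomial.C ((-1 : ℚ) ^ (j - 1) * (j : ℚ) * ((2 * (M + 1)).choose ((M + 1) - j) : ℚ)) *
          Polynomial.Chebyshev.U ℚ (2 * (j : ℤ) - 1)) := by
    rw [Finset.mul_sum, Finset.mul_sum]
    apply Finset.sum_congr rfl
    intro j _
    ring
  rw [h4, Finset.sum_congr rfl key]
  rw [show (2 * (M + 1) - 1) = 2 * M + 1 by omega, show (M + 1) - 1 = M from rfl]
  rw [map_mul, map_pow, map_ofNat, pow_succ]
  rw [mul_pow, show ((4:ℚ[X]))^M = 2^(2*M) by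
    rw [show (4:ℚ[X]) = 2^2 by norm_num, ← pow_mul]] at hd
  push_cast at hd ⊢
  rw [Finset.sum_neg_distrib]
  linear_combination hd
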